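/- Let S be a set of points in a finite projective plane of order n such that every point of S lies on at least one line meeting S in exactly t points, where 1 ≤ t ≤ n. Then |S| ≤ (1/2)·n·√(4tn − (3t+1)(t−1)) + (1/2)(t−1)n + t. -/

import Mathlib

open Configuration

theorem minimal_t_fold_blocking_aux (sr nr tr cr : ℝ)
    (htrR : (1:ℝ) ≤ tr) (htnR : tr ≤ nr) (hsrnn : (0:ℝ) ≤ sr) (hcrnn : (0:ℝ) ≤ cr)
    (hcoverR : sr ≤ cr * tr)
    (hCS : (sr * (nr + 1) - cr * tr) ^ 2
      ≤ ((nr ^ 2 + nr + 1) - cr) * (sr * (nr + sr) - cr * tr ^ 2))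
    (hdev : 2 * tr * (sr * (nr + 1)) ≤ sr * (nr + sr) + (nr ^ 2 + nr + 1) * tr ^ 2) :
    sr ≤ (1 / 2) * nr * Real.sqrt (4 * tr * nr - (3 * tr + 1) * (tr - 1))
        + (1 / 2) * (tr - 1) * nr + tr := by
  obtain ⟨X, hX⟩ : ∃ X, X = (nr ^ 2 + nr + 1) * (sr * (nr + sr)) - (sr * (nr + 1)) ^ 2 :=
    ⟨_, rfl⟩
  obtain ⟨Y, hY⟩ : ∃ Y, Y = 2 * tr * (sr * (nr + 1)) - sr * (nr + sr)
      - (nr ^ 2 + nr + 1) * tr ^ 2 := ⟨_, rfl⟩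
  have hslope : Y ≤ 0 := by rw [hY]; linarith
  have hH : 0 ≤ X + cr * Y := by
    have hring : ((nr ^ 2 + nr + 1) - cr) * (sr * (nr + sr) - cr * tr ^ 2)
        - (sr * (nr + 1) - cr * tr) ^ 2 = X + cr * Y := by
      rw [hX, hY]; ring
    linarith [hCS, hring]
  have hkey : sr ^ 2 ≤ sr * ((tr - 1) * nr + 2 * tr)
      + tr * (nr ^ 2 + nr + 1) * (nr - tr) := by
    rcases eq_or_lt_of_le hsrnn with h0 | hs0
    · have hnnn : (0 : ℝ) ≤ tr * (nr ^ 2 + nr + 1) * (nr - tr) :=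
        mul_nonneg (mul_nonneg (by linarith) (by nlinarith [sq_nonneg nr])) (by linarith)
      rw [← h0]
      simpa using hnnn
    · have h1 : 0 ≤ tr * X + (cr * tr) * Y := by
        have h := mul_nonneg (show (0:ℝ) ≤ tr by linarith) hH
        have hr2 : tr * (X + cr * Y) = tr * X + (cr * tr) * Y := by ring
        linarith [h, hr2]
      have h2 : (cr * tr) * Y ≤ sr * Y := mul_le_mul_of_nonpos_right hcoverR hslope
      have h3 : 0 ≤ tr * X + sr * Y := by linarith
      have hid : tr * X + sr * Y = sr * (tr * (nr ^ 2 + nr + 1) * (nr - tr)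
          + sr * ((tr - 1) * nr + 2 * tr) - sr ^ 2) := by
        rw [hX, hY]; ring
      have h4 : 0 ≤ tr * (nr ^ 2 + nr + 1) * (nr - tr)
          + sr * ((tr - 1) * nr + 2 * tr) - sr ^ 2 := by
        have h5 : 0 ≤ sr * (tr * (nr ^ 2 + nr + 1) * (nr - tr)
            + sr * ((tr - 1) * nr + 2 * tr) - sr ^ 2) := by linarith [h3, hid]
        exact (mul_nonneg_iff_of_pos_left hs0).mp h5
      linarith
  have hD : (0 : ℝ) ≤ 4 * tr * nr - (3 * tr + 1) * (tr - 1) := by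
    nlinarith [mul_le_mul_of_nonneg_left htnR (show (0:ℝ) ≤ 4 * tr by linarith),
      sq_nonneg (tr + 1)]
  have hsqrtnn : (0 : ℝ) ≤ Real.sqrt (4 * tr * nr - (3 * tr + 1) * (tr - 1)) :=
    Real.sqrt_nonneg _
  have hnrnn : (0 : ℝ) ≤ nr := by linarith
  by_cases hcase : sr ≤ (1 / 2) * (tr - 1) * nr + tr
  · have hpos : (0 : ℝ) ≤ (1 / 2) * nr
        * Real.sqrt (4 * tr * nr - (3 * tr + 1) * (tr - 1)) := by positivity
    linarith
  · push_neg at hcase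
    have hu : (0 : ℝ) < sr - tr - (1 / 2) * (tr - 1) * nr := by linarith
    have hid2 : (sr - tr - (1 / 2) * (tr - 1) * nr) ^ 2
        - ((1 / 2) * nr) ^ 2 * (4 * tr * nr - (3 * tr + 1) * (tr - 1))
        = sr ^ 2 - (sr * ((tr - 1) * nr + 2 * tr)
          + tr * (nr ^ 2 + nr + 1) * (nr - tr)) := by ring
    have husq : (sr - tr - (1 / 2) * (tr - 1) * nr) ^ 2
        ≤ ((1 / 2) * nr) ^ 2 * (4 * tr * nr - (3 * tr + 1) * (tr - 1)) := by
      linarith [hkey, hid2]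
    have h5 := Real.sqrt_le_sqrt husq
    rw [Real.sqrt_sq hu.le] at h5
    rw [Real.sqrt_mul (by positivity) _] at h5
    rw [Real.sqrt_sq (by positivity : (0:ℝ) ≤ (1/2) * nr)] at h5
    linarith

theorem minimal_t_fold_blocking_set_bound (P L : Type*) [Membership P L]
    [Fintype P] [Fintype L] [ProjectivePlane P L]
    (n t : ℕ) (hn : ProjectivePlane.order P L = n) (ht : 1 ≤ t) (htn : t ≤ n)
    (S : Finset P)
    (hS : ∀ p ∈ S, ∃ ℓ : L, p ∈ ℓ ∧ Nat.card {q : P // q ∈ S ∧ q ∈ ℓ} = t) :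
    (S.card : ℝ) ≤ (1 / 2) * n * Real.sqrt (4 * t * n - (3 * (t : ℝ) + 1) * ((t : ℝ) - 1))
        + (1 / 2) * ((t : ℝ) - 1) * n + t := by
  classical
  set s : ℕ := S.card with hs
  set i : L → ℕ := fun ℓ => (S.filter (fun p => p ∈ ℓ)).card with hidef
  -- number of lines through a point
  have hpt : ∀ p : P, (Finset.univ.filter (fun ℓ : L => p ∈ ℓ)).card = n + 1 := by
    intro p
    have h := ProjectivePlane.lineCount_eq (L := L) p
    rw [hn] at h
    rw [← h]
    simp [Configuration.lineCount, Nat.card_eq_fintype_card, Fintype.card_subtype]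
  -- unique line through two distinct points
  have hline : ∀ p q : P, p ≠ q →
      (Finset.univ.filter (fun ℓ : L => p ∈ ℓ ∧ q ∈ ℓ)).card = 1 := by
    intro p q hpq
    obtain ⟨ℓ, hℓ, huniq⟩ := HasLines.existsUnique_line (P := P) (L := L) p q hpq
    rw [Finset.card_eq_one]
    refine ⟨ℓ, ?_⟩
    ext m
    simp only [Finset.mem_filter, Finset.mem_univ, true_and, Finset.mem_singleton]
    exact ⟨fun h => huniq m h, fun h => h ▸ hℓ⟩
  -- first moment
  have hsum1 : ∑ ℓ : L, i ℓ = s * (n + 1) := by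
    have h : ∑ ℓ : L, i ℓ = ∑ p ∈ S, (Finset.univ.filter (fun ℓ : L => p ∈ ℓ)).card := by
      simp only [hidef, Finset.card_filter]
      rw [Finset.sum_comm]
    rw [h]
    simp [hpt, hs]
  -- second moment
  have hsum2 : ∑ ℓ : L, i ℓ * i ℓ = s * (n + s) := by
    have h1 : ∀ ℓ : L, i ℓ * i ℓ
        = ∑ p ∈ S, ∑ q ∈ S, (if p ∈ ℓ ∧ q ∈ ℓ then 1 else 0) := by
      intro ℓ
      simp only [hidef, Finset.card_filter]
      rw [Finset.sum_mul_sum]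
      refine Finset.sum_congr rfl fun p _ => Finset.sum_congr rfl fun q _ => ?_
      by_cases h1 : p ∈ ℓ <;> by_cases h2 : q ∈ ℓ <;> simp [h1, h2]
    calc ∑ ℓ : L, i ℓ * i ℓ
        = ∑ p ∈ S, ∑ q ∈ S, (Finset.univ.filter (fun ℓ : L => p ∈ ℓ ∧ q ∈ ℓ)).card := by
          simp only [h1, Finset.card_filter]
          rw [Finset.sum_comm]
          refine Finset.sum_congr rfl fun p _ => Finset.sum_comm
      _ = ∑ p ∈ S, (n + s) := by
          refine Finset.sum_congr rfl fun p hp => ?_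
          rw [← Finset.add_sum_erase _ _ hp]
          have hdiag : (Finset.univ.filter (fun ℓ : L => p ∈ ℓ ∧ p ∈ ℓ)).card = n + 1 := by
            simpa using hpt p
          have hoff : ∑ q ∈ S.erase p,
              (Finset.univ.filter (fun ℓ : L => p ∈ ℓ ∧ q ∈ ℓ)).card = s - 1 := by
            rw [Finset.sum_congr rfl fun q hq => hline p q
              (fun h => (Finset.mem_erase.1 hq).1 h.symm)]
            simp [Finset.card_erase_of_mem hp, hs]
          rw [hdiag, hoff]
          have hs1 : 1 ≤ s := Finset.card_pos.2 ⟨p, hp⟩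
          omega
      _ = s * (n + s) := by simp [mul_comm, hs]
  -- t-secants
  set T : Finset L := Finset.univ.filter (fun ℓ => i ℓ = t) with hT
  set c : ℕ := T.card with hc
  have hiℓ : ∀ ℓ : L, Nat.card {q : P // q ∈ S ∧ q ∈ ℓ} = i ℓ := by
    intro ℓ
    rw [Nat.card_eq_fintype_card, Fintype.card_subtype]
    apply congrArg
    ext p
    simp [hidef]
  have hcover : s ≤ c * t := by
    have hsub : S ⊆ T.biUnion (fun ℓ => S.filter (fun p => p ∈ ℓ)) := by
      intro p hp
      obtain ⟨ℓ, hpℓ, hcard⟩ := hS p hp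
      rw [hiℓ] at hcard
      exact Finset.mem_biUnion.2 ⟨ℓ, by simp [hT, hcard], by simp [hp, hpℓ]⟩
    calc s ≤ (T.biUnion (fun ℓ => S.filter (fun p => p ∈ ℓ))).card :=
            Finset.card_le_card hsub
      _ ≤ ∑ ℓ ∈ T, (S.filter (fun p => p ∈ ℓ)).card := Finset.card_biUnion_le
      _ = ∑ _ℓ ∈ T, t := by
            refine Finset.sum_congr rfl fun ℓ hℓ => ?_
            have := (Finset.mem_filter.1 hℓ).2
            simpa [hidef] using this
      _ = c * t := by simp [hc, mul_comm]
  have hTsum : ∑ ℓ ∈ T, i ℓ = c * t := by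
    rw [Finset.sum_congr rfl fun ℓ hℓ => (Finset.mem_filter.1 hℓ).2]
    simp [hc, mul_comm, hT]
  have hTsum2 : ∑ ℓ ∈ T, i ℓ * i ℓ = c * (t * t) := by
    rw [Finset.sum_congr rfl fun ℓ hℓ => by
      rw [(Finset.mem_filter.1 hℓ).2]]
    simp [hc, mul_comm]
  have hNL : Fintype.card L = n ^ 2 + n + 1 := by
    rw [ProjectivePlane.card_lines P L, hn]
  have hcN : c ≤ Fintype.card L :=
    le_trans (Finset.card_le_card (Finset.filter_subset _ _)) (by simp)
  -- move to the reals
  set sr : ℝ := (s : ℝ) with hsr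
  set nr : ℝ := (n : ℝ) with hnr
  set tr : ℝ := (t : ℝ) with htr
  set cr : ℝ := (c : ℝ) with hcr
  have hsum1R : ∑ ℓ : L, (i ℓ : ℝ) = sr * (nr + 1) := by
    rw [← Nat.cast_sum, hsum1, hsr, hnr]; push_cast; ring
  have hsum2R : ∑ ℓ : L, (i ℓ : ℝ) ^ 2 = sr * (nr + sr) := by
    have h : ∑ ℓ : L, (i ℓ : ℝ) ^ 2 = ((∑ ℓ : L, i ℓ * i ℓ : ℕ) : ℝ) := by
      rw [Nat.cast_sum]
      exact Finset.sum_congr rfl fun ℓ _ => by push_cast; ring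
    rw [h, hsum2, hsr, hnr]; push_cast; ring
  have hTsumR : ∑ ℓ ∈ T, (i ℓ : ℝ) = cr * tr := by
    rw [← Nat.cast_sum, hTsum, hcr, htr]; push_cast; ring
  have hTsum2R : ∑ ℓ ∈ T, (i ℓ : ℝ) ^ 2 = cr * tr ^ 2 := by
    have h : ∑ ℓ ∈ T, (i ℓ : ℝ) ^ 2 = ((∑ ℓ ∈ T, i ℓ * i ℓ : ℕ) : ℝ) := by
      rw [Nat.cast_sum]
      exact Finset.sum_congr rfl fun ℓ _ => by push_cast; ring
    rw [h, hTsum2, hcr, htr]; push_cast; ring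
  have hcomplsum : ∑ ℓ ∈ Tᶜ, (i ℓ : ℝ) = sr * (nr + 1) - cr * tr := by
    have h := Finset.sum_add_sum_compl T (fun ℓ => (i ℓ : ℝ))
    rw [hTsumR, hsum1R] at h
    linarith
  have hcomplsum2 : ∑ ℓ ∈ Tᶜ, (i ℓ : ℝ) ^ 2 = sr * (nr + sr) - cr * tr ^ 2 := by
    have h := Finset.sum_add_sum_compl T (fun ℓ => (i ℓ : ℝ) ^ 2)
    rw [hTsum2R, hsum2R] at h
    linarith
  have hcomplcard : (Tᶜ.card : ℝ) = (nr ^ 2 + nr + 1) - cr := by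
    rw [Finset.card_compl, Nat.cast_sub hcN, hNL, hnr, hcr]
    push_cast; ring
  -- Cauchy-Schwarz on the non-t-secant lines
  have hCS : (sr * (nr + 1) - cr * tr) ^ 2
      ≤ ((nr ^ 2 + nr + 1) - cr) * (sr * (nr + sr) - cr * tr ^ 2) := by
    have h := sq_sum_le_card_mul_sum_sq (s := Tᶜ) (f := fun ℓ => (i ℓ : ℝ))
    rw [hcomplsum, hcomplsum2, hcomplcard] at h
    exact h
  -- sum of squares of deviations is nonnegative
  have hdev : 2 * tr * (sr * (nr + 1)) ≤ sr * (nr + sr) + (nr ^ 2 + nr + 1) * tr ^ 2 := by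
    have h0 : (0 : ℝ) ≤ ∑ ℓ : L, ((i ℓ : ℝ) - tr) ^ 2 :=
      Finset.sum_nonneg fun ℓ _ => sq_nonneg _
    have hexp : ∑ ℓ : L, ((i ℓ : ℝ) - tr) ^ 2
        = (∑ ℓ : L, (i ℓ : ℝ) ^ 2) - (∑ ℓ : L, (i ℓ : ℝ)) * (2 * tr)
          + (Fintype.card L : ℝ) * tr ^ 2 := by
      have h1 : ∀ ℓ : L, ((i ℓ : ℝ) - tr) ^ 2
          = (i ℓ : ℝ) ^ 2 - (i ℓ : ℝ) * (2 * tr) + tr ^ 2 := fun ℓ => by ring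
      rw [Finset.sum_congr rfl fun ℓ _ => h1 ℓ, Finset.sum_add_distrib,
        Finset.sum_sub_distrib, ← Finset.sum_mul, Finset.sum_const]
      simp only [Finset.card_univ, nsmul_eq_mul]
    have hNr : (Fintype.card L : ℝ) = nr ^ 2 + nr + 1 := by
      rw [hNL, hnr]; push_cast; ring
    rw [hexp, hsum1R, hsum2R, hNr] at h0
    nlinarith [h0]
  have htrR : (1 : ℝ) ≤ tr := by rw [htr]; exact_mod_cast ht
  have htnR : tr ≤ nr := by rw [htr, hnr]; exact_mod_cast htn
  have hsrnn : (0 : ℝ) ≤ sr := by rw [hsr]; positivity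
  have hcrnn : (0 : ℝ) ≤ cr := by rw [hcr]; positivity
  have hcoverR : sr ≤ cr * tr := by
    rw [hsr, hcr, htr]; exact_mod_cast hcover
  exact minimal_t_fold_blocking_aux sr nr tr cr htrR htnR hsrnn hcrnn hcoverR hCS hdev
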